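/- Quasi-cycles preserve the Gibbs state but violate detailed balance: let β > 0, n ≥ 3, and E : Fin n → ℝ with maximum energy E_max and Gibbs distribution τ. Define the quasi-cycle matrix Q by Q_{i+1,i} = exp(−β(E_max − E_i)), Q_{i,i} = 1 − exp(−β(E_max − E_i)) (indices mod n), and all other entries 0. Then Q is a stochastic matrix with Qτ = τ, and Q does not satisfy detailed balance: there exist i, j with Q_{ji}·exp(−β E_i) ≠ Q_{ij}·exp(−β E_j). -/

import Mathlib

open Finset

/-- A (column-)stochastic matrix: nonnegative entries, each column sums to 1.
It acts on probability vectors by `(Q.mulVec p) j = ∑ i, Q j i * p i`. -/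
def IsStochastic {ι : Type*} [Fintype ι] (Q : Matrix ι ι ℝ) : Prop :=
  (∀ i j, 0 ≤ Q i j) ∧ ∀ j, ∑ i, Q i j = 1

/-- The partition function `Z = ∑ i, exp (-β E i)`. -/
noncomputable def partZ {ι : Type*} [Fintype ι] (β : ℝ) (E : ι → ℝ) : ℝ :=
  ∑ i, Real.exp (-(β * E i))

/-- The Gibbs distribution `τ i = exp (-β E i) / Z`. -/
noncomputable def gibbs {ι : Type*} [Fintype ι] (β : ℝ) (E : ι → ℝ) : ι → ℝ :=
  fun i => Real.exp (-(β * E i)) / partZ β E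

/-- The maximum energy `E_max = sup (range E)`. -/
noncomputable def Emax {n : ℕ} (E : Fin n → ℝ) : ℝ := sSup (Set.range E)

/-- The quasi-cycle matrix: `Q (i+1) i = exp (-β (E_max - E i))`,
`Q i i = 1 - exp (-β (E_max - E i))` (indices mod `n`), all other entries `0`. -/
noncomputable def quasiCycle {n : ℕ} [NeZero n] (β : ℝ) (E : Fin n → ℝ) :
    Matrix (Fin n) (Fin n) ℝ :=
  fun j i =>
    if j = i + 1 then Real.exp (-(β * (Emax E - E i)))
    else if j = i then 1 - Real.exp (-(β * (Emax E - E i)))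
    else 0

/-- For `n ≥ 3`, the quasi-cycle is a stochastic matrix preserving the
Gibbs state, yet it violates detailed balance. -/
theorem quasiCycle_gibbs_preserving_not_detailed_balance {n : ℕ} [NeZero n]
    (hn : 3 ≤ n) (β : ℝ) (hβ : 0 < β) (E : Fin n → ℝ) :
    IsStochastic (quasiCycle β E) ∧
    (quasiCycle β E).mulVec (gibbs β E) = gibbs β E ∧
    ∃ i j : Fin n, quasiCycle β E j i * Real.exp (-(β * E i)) ≠
      quasiCycle β E i j * Real.exp (-(β * E j)) := by
  have h1n : 1 % n = 1 := Nat.mod_eq_of_lt (by omega)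
  have hsucc : ∀ i : Fin n, i + 1 ≠ i := by
    intro i h
    have h2 : ((i+1 : Fin n):ℕ) = i := congrArg Fin.val h
    rw [Fin.val_add, Fin.val_one', h1n] at h2
    have hi := i.isLt
    rcases Nat.lt_or_ge (i.val + 1) n with h' | h'
    · rw [Nat.mod_eq_of_lt h'] at h2; omega
    · have hn' : i.val + 1 = n := by omega
      rw [hn', Nat.mod_self] at h2; omega
  have hEle : ∀ i, E i ≤ Emax E :=
    fun i => le_csSup (Set.finite_range E).bddAbove ⟨i, rfl⟩
  have hexp_le : ∀ i : Fin n, Real.exp (-(β * (Emax E - E i))) ≤ 1 := by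
    intro i
    rw [Real.exp_le_one_iff]
    nlinarith [hEle i]
  have hZ : 0 < partZ β E :=
    Finset.sum_pos (fun i _ => Real.exp_pos _) univ_nonempty
  have key : ∀ k : Fin n,
      Real.exp (-(β * (Emax E - E k))) * Real.exp (-(β * E k)) =
        Real.exp (-(β * Emax E)) := by
    intro k; rw [← Real.exp_add]; ring_nf
  refine ⟨⟨?_, ?_⟩, ?_, ?_⟩
  · intro j i
    simp only [quasiCycle]
    rcases eq_or_ne j (i+1) with h1 | h1
    · rw [if_pos h1]; positivity
    · rw [if_neg h1]
      rcases eq_or_ne j i with h2 | h2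
      · rw [if_pos h2]; linarith [hexp_le i]
      · rw [if_neg h2]
  · intro i
    have hdecomp : ∀ j : Fin n, quasiCycle β E j i =
        (if j = i + 1 then Real.exp (-(β * (Emax E - E i))) else 0) +
        (if j = i then 1 - Real.exp (-(β * (Emax E - E i))) else 0) := by
      intro j
      simp only [quasiCycle]
      rcases eq_or_ne j (i+1) with h1 | h1
      · have h2 : j ≠ i := by rw [h1]; exact hsucc i
        rw [if_pos h1, if_pos h1, if_neg h2, add_zero]
      · rw [if_neg h1, if_neg h1]
        rcases eq_or_ne j i with h2 | h2
        · rw [if_pos h2, zero_add]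
        · rw [if_neg h2, add_zero]
    rw [Finset.sum_congr rfl (fun j _ => hdecomp j), Finset.sum_add_distrib]
    simp only [Finset.sum_ite_eq', Finset.mem_univ, if_pos]
    ring
  · funext j
    have hdecomp : ∀ i : Fin n, quasiCycle β E j i * gibbs β E i =
        (if i = j - 1 then Real.exp (-(β * (Emax E - E i))) * gibbs β E i else 0) +
        (if i = j then (1 - Real.exp (-(β * (Emax E - E i)))) * gibbs β E i else 0) := by
      intro i
      simp only [quasiCycle]
      rcases eq_or_ne i (j - 1) with h1 | h1
      · have hj : j = i + 1 := by rw [h1]; exact (sub_add_cancel j 1).symm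
        have h2 : i ≠ j := by intro h; exact hsucc i (by rw [← hj, ← h])
        rw [if_pos hj, if_pos h1, if_neg h2, add_zero]
      · have hj : j ≠ i + 1 := fun h => h1 (by rw [h]; exact (add_sub_cancel_right i 1).symm)
        rw [if_neg hj]
        rcases eq_or_ne i j with h2 | h2
        · rw [if_pos h2.symm, if_neg h1, if_pos h2, zero_add]
        · rw [if_neg (Ne.symm h2), if_neg h1, if_neg h2, add_zero, zero_mul]
    show ∑ i, quasiCycle β E j i * gibbs β E i = gibbs β E j
    rw [Finset.sum_congr rfl (fun i _ => hdecomp i), Finset.sum_add_distrib]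
    simp only [Finset.sum_ite_eq', Finset.mem_univ, if_pos]
    unfold gibbs
    linear_combination (key (j - 1)) / partZ β E - (key j) / partZ β E
  · refine ⟨0, 1, ?_⟩
    have h01 : (0:Fin n) ≠ 1 := by
      intro h
      have := congrArg Fin.val h
      rw [Fin.val_zero, Fin.val_one', h1n] at this
      omega
    have h02 : (0:Fin n) ≠ 1 + 1 := by
      intro h
      have := congrArg Fin.val h
      rw [Fin.val_zero, Fin.val_add, Fin.val_one', h1n, Nat.mod_eq_of_lt (by omega)] at this
      omega
    have hQ10 : quasiCycle β E 1 0 = Real.exp (-(β * (Emax E - E 0))) := by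
      simp only [quasiCycle]
      rw [if_pos (by rw [zero_add])]
    have hQ01 : quasiCycle β E 0 1 = 0 := by
      simp only [quasiCycle]
      rw [if_neg h02, if_neg h01]
    rw [hQ10, hQ01, zero_mul]
    positivity
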